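/- With the setup of an untrained Wilson network (m×n grid, all-to-all coupling within each column, no coupling between columns) and a balanced coloring K, define two columns to be related if they share a color; extend to the equivalence relation of lying in a common 'block'. Then within each block, every color appearing in the block appears with the same multiplicity in every column of the block, and distinct blocks have disjoint sets of colors. -/

import Mathlib

/-- Two columns share a color if some color appears in both. -/
def sharesColor {m n : ℕ} {C : Type*} (K : Fin m × Fin n → C) (j j' : Fin n) : Prop :=
  ∃ i i' : Fin m, K (i, j) = K (i', j')

lemma colcount {m n : ℕ} {C : Type*} [DecidableEq C] (K : Fin m × Fin n → C)
    (j : Fin n) (c : C) :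
    (Finset.univ.filter fun z : Fin m × Fin n => z.2 = j ∧ K z = c).card =
      (Finset.univ.filter fun i : Fin m => K (i, j) = c).card := by
  have : (Finset.univ.filter fun z : Fin m × Fin n => z.2 = j ∧ K z = c) =
      (Finset.univ.filter fun i : Fin m => K (i, j) = c).map
        ⟨fun i => (i, j), fun a b h => by simpa using h⟩ := by
    ext z
    simp only [Finset.mem_filter, Finset.mem_map, Finset.mem_univ, true_and,
      Function.Embedding.coeFn_mk]
    constructor
    · rintro ⟨h1, h2⟩
      exact ⟨z.1, by rw [show (z.1, j) = z by rw [← h1]]; exact ⟨h2, Prod.ext rfl h1.symm⟩⟩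
    · rintro ⟨i, hi, rfl⟩
      exact ⟨rfl, hi⟩
  rw [this, Finset.card_map]

lemma step_eq {m n : ℕ} {C : Type*} [DecidableEq C] (K : Fin m × Fin n → C)
    (hbal : ∀ x y : Fin m × Fin n, K x = K y → ∀ c : C,
      (Finset.univ.filter fun z : Fin m × Fin n =>
          z ≠ x ∧ z.2 = x.2 ∧ K z = c).card =
        (Finset.univ.filter fun z : Fin m × Fin n =>
          z ≠ y ∧ z.2 = y.2 ∧ K z = c).card)
    {j j' : Fin n} (h : sharesColor K j j') (c : C) :
    (Finset.univ.filter fun i : Fin m => K (i, j) = c).card =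
      (Finset.univ.filter fun i : Fin m => K (i, j') = c).card := by
  obtain ⟨i, i', hK⟩ := h
  have key := hbal (i, j) (i', j') hK c
  have erase_eq : ∀ (x : Fin m × Fin n),
      (Finset.univ.filter fun z : Fin m × Fin n => z ≠ x ∧ z.2 = x.2 ∧ K z = c) =
      (Finset.univ.filter fun z : Fin m × Fin n => z.2 = x.2 ∧ K z = c).erase x := by
    intro x
    ext z
    simp only [Finset.mem_filter, Finset.mem_erase, Finset.mem_univ, true_and, and_assoc]
  rw [erase_eq, erase_eq, Finset.card_erase_eq_ite, Finset.card_erase_eq_ite] at key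
  set A := Finset.univ.filter fun z : Fin m × Fin n => z.2 = j ∧ K z = c with hA
  set B := Finset.univ.filter fun z : Fin m × Fin n => z.2 = j' ∧ K z = c with hB
  have hmemA : (i, j) ∈ A ↔ K (i, j) = c := by simp [hA]
  have hmemB : (i', j') ∈ B ↔ K (i', j') = c := by simp [hB]
  have hAB : A.card = B.card := by
    by_cases hc : K (i, j) = c
    · have h1 : (i, j) ∈ A := hmemA.mpr hc
      have h2 : (i', j') ∈ B := hmemB.mpr (hK ▸ hc)
      rw [if_pos h1, if_pos h2] at key
      have c1 := Finset.card_pos.mpr ⟨_, h1⟩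
      have c2 := Finset.card_pos.mpr ⟨_, h2⟩
      omega
    · have h1 : (i, j) ∉ A := fun h => hc (hmemA.mp h)
      have h2 : (i', j') ∉ B := fun h => hc (hK ▸ hmemB.mp h)
      rw [if_neg h1, if_neg h2] at key
      exact key
  rw [← colcount K j c, ← colcount K j' c]
  exact hAB

theorem block_columns_equal_multiplicities_and_blocks_color_disjoint
    (m n : ℕ) (C : Type*) [DecidableEq C] (K : Fin m × Fin n → C)
    (hbal : ∀ x y : Fin m × Fin n, K x = K y → ∀ c : C,
      (Finset.univ.filter fun z : Fin m × Fin n =>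
          z ≠ x ∧ z.2 = x.2 ∧ K z = c).card =
        (Finset.univ.filter fun z : Fin m × Fin n =>
          z ≠ y ∧ z.2 = y.2 ∧ K z = c).card) :
    (∀ j j' : Fin n, Relation.ReflTransGen (sharesColor K) j j' →
      ∀ c : C, (Finset.univ.filter fun i : Fin m => K (i, j) = c).card =
        (Finset.univ.filter fun i : Fin m => K (i, j') = c).card) ∧
    (∀ j j' : Fin n, ¬ Relation.ReflTransGen (sharesColor K) j j' →
      ∀ c : C, ¬ ((∃ i : Fin m, K (i, j) = c) ∧ ∃ i' : Fin m, K (i', j') = c)) := by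
  constructor
  · intro j j' hrel c
    induction hrel with
    | refl => rfl
    | tail _ hstep ih => exact ih.trans (step_eq K hbal hstep c)
  · intro j j' hnrel c ⟨⟨i, hi⟩, ⟨i', hi'⟩⟩
    exact hnrel (Relation.ReflTransGen.single ⟨i, i', hi.trans hi'.symm⟩)
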